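/- arXiv:0807.4814 — 2 statements merged into one kernel-verified Lean document; each statement's English description precedes it below -/
import Mathlib

section
/- For any real y ≠ 0, the logarithmic potential of the measure on ℝ with Cauchy density x ↦ (1/π)|y|/(x^2+y^2) equals, at every point t ∈ ℝ, the logarithmic potential of the Dirac mass at iy: ∫_ℝ log(1/|t-x|)·(1/π)·|y|/(x^2+y^2) dx = log(1/|t - iy|) = -(1/2)·log(t^2 + y^2). -/
open MeasureTheory Real
open Set intervalIntegral

lemma neg_log_le (x : ℝ) (hx : 0 < x) : -Real.log x ≤ 2 * x ^ (-(1/2) : ℝ) := by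
  have h1 : (0:ℝ) < x ^ ((1/2):ℝ) := Real.rpow_pos_of_pos hx _
  have h2 : Real.log (x ^ ((1/2):ℝ)) ≤ x ^ ((1/2):ℝ) - 1 := Real.log_le_sub_one_of_pos h1
  have h3 : Real.log ((x ^ ((1/2):ℝ))⁻¹) ≤ (x ^ ((1/2):ℝ))⁻¹ - 1 :=
    Real.log_le_sub_one_of_pos (by positivity)
  rw [Real.log_inv, Real.log_rpow hx] at h3
  have h4 : x ^ (-(1/2) : ℝ) = (x ^ ((1/2):ℝ))⁻¹ := Real.rpow_neg hx.le _
  rw [h4]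
  nlinarith [h3]

lemma integrableOn_log_Ioc01 : IntegrableOn Real.log (Set.Ioc 0 1) volume := by
  have hg : IntegrableOn (fun x : ℝ => 2 * x ^ (-(1/2) : ℝ)) (Set.Ioc 0 1) volume := by
    have := (intervalIntegral.intervalIntegrable_rpow' (a := 0) (b := 1)
      (r := (-(1/2) : ℝ)) (by norm_num)).const_mul 2
    rw [intervalIntegrable_iff_integrableOn_Ioc_of_le (by norm_num)] at this
    exact this
  refine Integrable.mono hg (Real.measurable_log.aestronglyMeasurable.restrict) ?_
  rw [ae_restrict_iff' measurableSet_Ioc]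
  filter_upwards with x hx
  have hx0 : 0 < x := hx.1
  have hlog : Real.log x ≤ 0 := Real.log_nonpos hx0.le hx.2
  have h := neg_log_le x hx0
  rw [Real.norm_eq_abs, Real.norm_eq_abs, abs_of_nonpos hlog, abs_of_nonneg (by positivity)]
  exact h

lemma integrableOn_log_Ioc0pb : IntegrableOn Real.log (Set.Ioc 0 (π/2)) volume := by
  have h1 : (1:ℝ) ≤ π/2 := by nlinarith [Real.pi_gt_three]
  have h2 : IntegrableOn Real.log (Set.Ioc 1 (π/2)) volume := by
    have : IntervalIntegrable Real.log volume 1 (π/2) :=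
      intervalIntegrable_log (by rw [Set.uIcc_of_le h1]; intro h; exact absurd h.1 (by norm_num))
    rwa [intervalIntegrable_iff_integrableOn_Ioc_of_le h1] at this
  have := integrableOn_log_Ioc01.union h2
  refine this.mono_set ?_
  intro x hx
  rcases le_or_gt x 1 with h | h
  · exact Or.inl ⟨hx.1, h⟩
  · exact Or.inr ⟨h, hx.2⟩

lemma integrableOn_log_abs_sin : IntegrableOn (fun u => Real.log |Real.sin u|) (Set.Ioc 0 (π/2)) volume := by
  have hmeas : AEStronglyMeasurable (fun u => Real.log |Real.sin u|) (volume.restrict (Set.Ioc 0 (π/2))) :=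
    (Real.measurable_log.comp (Real.continuous_sin.measurable.abs)).aestronglyMeasurable
  have hg : IntegrableOn (fun u : ℝ => |Real.log u| + |Real.log (2/π)|) (Set.Ioc 0 (π/2)) volume :=
    (integrableOn_log_Ioc0pb.abs.add (integrableOn_const (by simp [Real.volume_Ioc])))
  refine Integrable.mono hg hmeas ?_
  rw [ae_restrict_iff' measurableSet_Ioc]
  filter_upwards with u hu
  have hu0 : 0 < u := hu.1
  have hupi : u ≤ π/2 := hu.2
  have hsinpos : 0 < Real.sin u := Real.sin_pos_of_pos_of_lt_pi hu0 (by nlinarith [Real.pi_pos])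
  have habs : |Real.sin u| = Real.sin u := abs_of_pos hsinpos
  have hub : Real.log (Real.sin u) ≤ Real.log u := Real.log_le_log hsinpos (Real.sin_le hu0.le)
  have hlb : Real.log (2/π) + Real.log u ≤ Real.log (Real.sin u) := by
    have h2 : Real.log (2/π * u) ≤ Real.log (Real.sin u) :=
      Real.log_le_log (by positivity) (Real.mul_le_sin hu0.le hupi)
    rwa [Real.log_mul (by positivity) hu0.ne'] at h2
  rw [Real.norm_eq_abs, Real.norm_eq_abs, habs]
  have h3 : |(|Real.log u| + |Real.log (2/π)|)| = |Real.log u| + |Real.log (2/π)| :=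
    abs_of_nonneg (by positivity)
  rw [h3, abs_le]
  constructor
  · have := neg_abs_le (Real.log u); have := neg_abs_le (Real.log (2/π)); linarith
  · have := le_abs_self (Real.log u); have := abs_nonneg (Real.log (2/π)); linarith

lemma ii_logcos_0pb : IntervalIntegrable (fun θ => Real.log |Real.cos θ|) volume 0 (π/2) := by
  have hsin : IntervalIntegrable (fun u => Real.log |Real.sin u|) volume 0 (π/2) := by
    rw [intervalIntegrable_iff_integrableOn_Ioc_of_le (by positivity)]
    exact integrableOn_log_abs_sin
  have := hsin.comp_sub_left (π/2)
  simp only [sub_self, sub_zero] at this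
  have heq : (fun x => Real.log |Real.sin (π/2 - x)|) = (fun θ => Real.log |Real.cos θ|) := by
    funext x; rw [Real.sin_pi_div_two_sub]
  rw [heq] at this
  exact this.symm


lemma ii_logcos_base : IntervalIntegrable (fun θ => Real.log |Real.cos θ|) volume (-(π/2)) (π/2) := by
  have hneg : IntervalIntegrable (fun θ => Real.log |Real.cos θ|) volume (-(π/2)) 0 := by
    have := (IntervalIntegrable.iff_comp_neg).1 ii_logcos_0pb
    simp only [Real.cos_neg, neg_zero] at this
    exact this.symm
  exact hneg.trans ii_logcos_0pb

lemma logcos_periodic : Function.Periodic (fun x => Real.log |Real.cos x|) π := by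
  intro x; simp [Real.cos_add_pi]

lemma ii_logcos_shift (k : ℤ) :
    IntervalIntegrable (fun θ => Real.log |Real.cos θ|) volume (-(π/2) + k * π) (π/2 + k * π) := by
  have := ii_logcos_base.comp_sub_right (k * π)
  have heq : (fun x => Real.log |Real.cos (x - k * π)|) = (fun θ => Real.log |Real.cos θ|) := by
    funext x
    exact logcos_periodic.sub_int_mul_eq k
  rwa [heq] at this

lemma ii_logcos_any (c : ℝ) :
    IntervalIntegrable (fun θ => Real.log |Real.cos θ|) volume c (c + π) := by
  set k : ℤ := ⌊c / π + 1/2⌋ with hk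
  have hpi : (0:ℝ) < π := Real.pi_pos
  have h1 : (k:ℝ) ≤ c / π + 1/2 := Int.floor_le _
  have h2 : c / π + 1/2 < k + 1 := Int.lt_floor_add_one _
  have hc1 : -(π/2) + k * π ≤ c := by
    have := mul_le_mul_of_nonneg_right h1 hpi.le
    rw [add_mul, div_mul_cancel₀ _ hpi.ne'] at this
    linarith
  have hc2 : c + π ≤ π/2 + (k+1) * π := by
    have := mul_le_mul_of_nonneg_right h2.le hpi.le
    rw [add_mul, div_mul_cancel₀ _ hpi.ne'] at this
    nlinarith
  have hbig : IntervalIntegrable (fun θ => Real.log |Real.cos θ|) volume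
      (-(π/2) + k * π) (π/2 + (k+1) * π) := by
    refine (ii_logcos_shift k).trans (a := -(π/2) + k * π) (b := π/2 + k * π) ?_
    have := ii_logcos_shift (k+1)
    have he : -(π/2) + (k+1 : ℤ) * π = π/2 + k * π := by push_cast; ring
    have he2 : (π/2 + (k+1 : ℤ) * π : ℝ) = π/2 + (k+1) * π := by push_cast; ring
    rw [he, he2] at this
    exact this
  refine hbig.mono_set ?_
  rw [Set.uIcc_of_le (by linarith), Set.uIcc_of_le (by nlinarith)]
  exact Set.Icc_subset_Icc hc1 hc2

lemma key_integral (Y t : ℝ) (hY : 0 < Y) :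
    ∫ θ in Set.Ioo (-(π/2)) (π/2), Real.log |t - Y * Real.tan θ|
      = π * Real.log (Real.sqrt (t^2 + Y^2)) := by
  have hpi : (0:ℝ) < π := Real.pi_pos
  set R : ℝ := Real.sqrt (t^2 + Y^2) with hRdef
  have hsq : (0:ℝ) < t^2 + Y^2 := by positivity
  have hR : 0 < R := Real.sqrt_pos.2 hsq
  set z : ℂ := ⟨t, Y⟩ with hz
  have hzne : z ≠ 0 := by
    intro h
    have : z.im = 0 := by rw [h]; simp
    simp [hz] at this
    exact hY.ne' this
  have habsz : ‖z‖ = R := by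
    rw [Complex.norm_def, Complex.normSq_mk, hRdef]
    ring_nf
  set φ : ℝ := z.arg with hφ
  have hcosφ : R * Real.cos φ = t := by
    rw [hφ, Complex.cos_arg hzne, habsz]
    field_simp [hz]
    rfl
  have hsinφ : R * Real.sin φ = Y := by
    rw [hφ, Complex.sin_arg, habsz]
    field_simp [hz]
    rfl
  -- a.e. pointwise identity
  have hN : volume {θ : ℝ | Real.cos (θ + φ) = 0} = 0 := by
    have hc : {θ : ℝ | Real.cos (θ + φ) = 0} ⊆
        Set.range (fun k : ℤ => (2 * (k:ℝ) + 1) * π / 2 - φ) := by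
      intro θ hθ
      obtain ⟨k, hk⟩ := Real.cos_eq_zero_iff.1 hθ
      exact ⟨k, by linarith⟩
    exact measure_mono_null hc ((Set.countable_range _).measure_zero _)
  have hcongr : ∫ θ in Set.Ioo (-(π/2)) (π/2), Real.log |t - Y * Real.tan θ|
      = ∫ θ in Set.Ioo (-(π/2)) (π/2),
          (Real.log R + (Real.log |Real.cos (θ + φ)| - Real.log |Real.cos θ|)) := by
    refine MeasureTheory.setIntegral_congr_ae measurableSet_Ioo ?_
    have hae : ∀ᵐ θ : ℝ, Real.cos (θ + φ) ≠ 0 := by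
      rw [MeasureTheory.ae_iff]
      simpa using hN
    filter_upwards [hae] with θ hne hθ
    have hcos : 0 < Real.cos θ := Real.cos_pos_of_mem_Ioo hθ
    have hkey : t - Y * Real.tan θ = R * Real.cos (θ + φ) / Real.cos θ := by
      rw [Real.tan_eq_sin_div_cos, Real.cos_add]
      field_simp
      linear_combination (-Real.cos θ) * hcosφ + Real.sin θ * hsinφ
    rw [hkey, abs_div, abs_mul, abs_of_pos hR, abs_of_pos hcos,
      Real.log_div (by positivity) hcos.ne', Real.log_mul hR.ne' (abs_ne_zero.2 hne)]
    ring
  rw [hcongr]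
  -- integrability
  have hA : IntegrableOn (fun θ => Real.log |Real.cos (θ + φ)|)
      (Set.Ioo (-(π/2)) (π/2)) volume := by
    have h1 := (ii_logcos_any (-(π/2) + φ)).comp_add_right φ
    have he1 : -(π/2) + φ - φ = -(π/2) := by ring
    have he2 : -(π/2) + φ + π - φ = π/2 := by ring
    rw [he1, he2] at h1
    rw [intervalIntegrable_iff_integrableOn_Ioc_of_le (by linarith)] at h1
    exact h1.mono_set Set.Ioo_subset_Ioc_self
  have hB : IntegrableOn (fun θ => Real.log |Real.cos θ|)
      (Set.Ioo (-(π/2)) (π/2)) volume := by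
    have h1 := ii_logcos_base
    rw [intervalIntegrable_iff_integrableOn_Ioc_of_le (by linarith)] at h1
    exact h1.mono_set Set.Ioo_subset_Ioc_self
  have hconst : IntegrableOn (fun _ : ℝ => Real.log R) (Set.Ioo (-(π/2)) (π/2)) volume :=
    integrableOn_const (by simp [Real.volume_Ioo])
  have hAB : IntegrableOn (fun θ => Real.log |Real.cos (θ + φ)| - Real.log |Real.cos θ|)
      (Set.Ioo (-(π/2)) (π/2)) volume := hA.sub hB
  rw [MeasureTheory.integral_add hconst hAB, MeasureTheory.integral_sub hA hB]
  have hshift : ∫ θ in Set.Ioo (-(π/2)) (π/2), Real.log |Real.cos (θ + φ)|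
      = ∫ θ in Set.Ioo (-(π/2)) (π/2), Real.log |Real.cos θ| := by
    rw [← MeasureTheory.integral_Ioc_eq_integral_Ioo, ← MeasureTheory.integral_Ioc_eq_integral_Ioo,
      ← intervalIntegral.integral_of_le (by linarith), ← intervalIntegral.integral_of_le (by linarith),
      intervalIntegral.integral_comp_add_right (fun u => Real.log |Real.cos u|) φ]
    have h3 := logcos_periodic.intervalIntegral_add_eq (-(π/2) + φ) (-(π/2))
    have he1 : -(π/2) + φ + π = π/2 + φ := by ring
    have he2 : -(π/2) + π = π/2 := by ring
    rw [he1, he2] at h3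
    exact h3
  rw [hshift, sub_self, add_zero, MeasureTheory.setIntegral_const]
  rw [measureReal_def, Real.volume_Ioo]
  have : π/2 - -(π/2) = π := by ring
  rw [this, ENNReal.toReal_ofReal hpi.le, smul_eq_mul]

lemma subst_tan (Y t : ℝ) (hY : 0 < Y) :
    (∫ x : ℝ, Real.log (1 / |t - x|) * ((1 / π) * Y / (x ^ 2 + Y ^ 2)))
      = ∫ θ in Set.Ioo (-(π/2)) (π/2), Real.log (1 / |t - Y * Real.tan θ|) * (1/π) := by
  have hpi : (0:ℝ) < π := Real.pi_pos
  set s : Set ℝ := Set.Ioo (-(π/2)) (π/2) with hs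
  have himg : (fun θ => Y * Real.tan θ) '' s = Set.univ := by
    apply Set.eq_univ_of_forall
    intro x
    exact ⟨Real.arctan (x / Y), Real.arctan_mem_Ioo _, by
      simp [Real.tan_arctan]; field_simp⟩
  have hderiv : ∀ θ ∈ s, HasDerivWithinAt (fun θ => Y * Real.tan θ)
      (Y * (1 / Real.cos θ ^ 2)) s θ := by
    intro θ hθ
    have hcos : 0 < Real.cos θ := Real.cos_pos_of_mem_Ioo hθ
    exact ((Real.hasDerivAt_tan hcos.ne').const_mul Y).hasDerivWithinAt
  have hinj : Set.InjOn (fun θ => Y * Real.tan θ) s := by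
    intro a ha b hb hab
    exact Real.injOn_tan ha hb (mul_left_cancel₀ hY.ne' hab)
  have := MeasureTheory.integral_image_eq_integral_abs_deriv_smul measurableSet_Ioo hderiv hinj
    (fun x => Real.log (1 / |t - x|) * ((1 / π) * Y / (x ^ 2 + Y ^ 2)))
  rw [himg] at this
  rw [← MeasureTheory.setIntegral_univ, this]
  refine MeasureTheory.setIntegral_congr_fun measurableSet_Ioo ?_
  intro θ hθ
  have hcos : 0 < Real.cos θ := Real.cos_pos_of_mem_Ioo hθ
  have hden : (Y * Real.tan θ) ^ 2 + Y ^ 2 = Y^2 / Real.cos θ ^ 2 := by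
    rw [Real.tan_eq_sin_div_cos]
    field_simp
    nlinarith [Real.sin_sq_add_cos_sq θ]
  simp only [smul_eq_mul, hden]
  rw [abs_of_pos (by positivity : (0:ℝ) < Y * (1 / Real.cos θ ^ 2))]
  field_simp

theorem stmt3 (y : ℝ) (hy : y ≠ 0) (t : ℝ) :
    (∫ x : ℝ, Real.log (1 / |t - x|) * ((1 / π) * |y| / (x ^ 2 + y ^ 2)))
      = Real.log (1 / ‖(t : ℂ) - Complex.I * y‖) ∧
    Real.log (1 / ‖(t : ℂ) - Complex.I * y‖)
      = -(1/2) * Real.log (t ^ 2 + y ^ 2) := by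
  have hpi : (0:ℝ) < π := Real.pi_pos
  have hY : 0 < |y| := abs_pos.2 hy
  have hsq : (0:ℝ) < t^2 + y^2 := by
    have h2 : 0 < y^2 := by rw [← sq_abs]; positivity
    positivity
  have habs : ‖(t:ℂ) - Complex.I * y‖ = Real.sqrt (t^2 + y^2) := by
    rw [Complex.norm_def]
    congr 1
    simp [Complex.normSq_apply]
    ring
  have hpart2 : Real.log (1 / ‖(t:ℂ) - Complex.I*y‖) = -(1/2) * Real.log (t^2+y^2) := by
    rw [habs, one_div, Real.log_inv, Real.log_sqrt hsq.le]
    ring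
  refine ⟨?_, hpart2⟩
  rw [hpart2]
  have hyY : y^2 = |y|^2 := (sq_abs y).symm
  rw [hyY]
  rw [subst_tan |y| t hY, MeasureTheory.integral_mul_const]
  have hneg : (fun θ => Real.log (1 / |t - |y| * Real.tan θ|))
      = fun θ => -Real.log |t - |y| * Real.tan θ| := by
    funext θ; rw [one_div, Real.log_inv]
  simp_rw [one_div, Real.log_inv]
  rw [MeasureTheory.integral_neg, key_integral |y| t hY,
    Real.log_sqrt (by positivity : (0:ℝ) ≤ t^2 + |y|^2)]
  field_simp
end

section
/- Let c > 0 and y ∈ (-c, c). Then the function on K_c = {it : |t| ≥ c} with density (1/π)·√(c²-y²) / (|z - iy|·√(|z|²-c²)) with respect to arclength is a probability density: (1/π)·∫_{|t|≥c} √(c²-y²) / (|t-y|·√(t²-c²)) dt = 1. -/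
open MeasureTheory Real Set Filter Topology

lemma aux19 (c y : ℝ) (hc : 0 < c) (hy1 : -c < y) (hy2 : y < c) :
    (∫ t in Set.Ioi c, Real.sqrt (c ^ 2 - y ^ 2) / ((t - y) * Real.sqrt (t ^ 2 - c ^ 2)))
      = π / 2 + Real.arcsin (y / c) := by
  have hA : 0 < c ^ 2 - y ^ 2 := by nlinarith
  set g : ℝ → ℝ := fun x => (c ^ 2 - y * x) / (c * (x - y)) with hgdef
  set F : ℝ → ℝ := fun x => -Real.arcsin (g x) with hFdef
  have hderiv : ∀ x ∈ Set.Ioi c, HasDerivAt F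
      (Real.sqrt (c ^ 2 - y ^ 2) / ((x - y) * Real.sqrt (x ^ 2 - c ^ 2))) x := by
    intro x hx
    simp only [Set.mem_Ioi] at hx
    have hxy : 0 < x - y := by linarith
    have hB : 0 < x ^ 2 - c ^ 2 := by nlinarith
    have hden : c * (x - y) ≠ 0 := by positivity
    have hg' : HasDerivAt g ((y ^ 2 - c ^ 2) / (c * (x - y) ^ 2)) x := by
      have h1 : HasDerivAt (fun x : ℝ => c ^ 2 - y * x) (-y) x := by
        simpa using ((hasDerivAt_id x).const_mul y).const_sub (c ^ 2)
      have h2 : HasDerivAt (fun x : ℝ => c * (x - y)) c x := by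
        simpa using ((hasDerivAt_id x).sub_const y).const_mul c
      have := h1.div h2 hden
      refine this.congr_deriv ?_
      field_simp
      ring
    have hgx : 1 - g x ^ 2 = (c ^ 2 - y ^ 2) * (x ^ 2 - c ^ 2) / (c * (x - y)) ^ 2 := by
      simp only [hgdef]
      field_simp
      ring
    have hpos : 0 < 1 - g x ^ 2 := by rw [hgx]; positivity
    have hne1 : g x ≠ 1 := by intro h; rw [h] at hpos; norm_num at hpos
    have hne2 : g x ≠ -1 := by intro h; rw [h] at hpos; norm_num at hpos
    have hsq : Real.sqrt (1 - g x ^ 2)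
        = Real.sqrt (c ^ 2 - y ^ 2) * Real.sqrt (x ^ 2 - c ^ 2) / (c * (x - y)) := by
      rw [hgx, Real.sqrt_div (by positivity), Real.sqrt_mul hA.le,
        Real.sqrt_sq (by positivity)]
    have hcomp := ((Real.hasDerivAt_arcsin hne2 hne1).comp x hg').neg
    refine hcomp.congr_deriv ?_
    rw [hsq]
    have hAs : (0:ℝ) < Real.sqrt (c ^ 2 - y ^ 2) := Real.sqrt_pos.mpr hA
    have hBs : (0:ℝ) < Real.sqrt (x ^ 2 - c ^ 2) := Real.sqrt_pos.mpr hB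
    have hA2 : Real.sqrt (c ^ 2 - y ^ 2) ^ 2 = c ^ 2 - y ^ 2 := Real.sq_sqrt hA.le
    field_simp
    linear_combination (-1 : ℝ) * hA2
  have hcont : ContinuousWithinAt F (Set.Ici c) c := by
    apply ContinuousAt.continuousWithinAt
    apply ContinuousAt.neg
    apply Real.continuous_arcsin.continuousAt.comp
    apply ContinuousAt.div
    · fun_prop
    · fun_prop
    · have : (0:ℝ) < c * (c - y) := by nlinarith
      exact ne_of_gt this
  have htend : Tendsto F atTop (𝓝 (Real.arcsin (y / c))) := by
    have h1 : Tendsto g atTop (𝓝 (-(y / c))) := by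
      have heq : g =ᶠ[atTop] fun x => -(y / c) + (c ^ 2 - y ^ 2) / c * (x - y)⁻¹ := by
        filter_upwards [eventually_gt_atTop y] with x hx
        have : x - y ≠ 0 := sub_ne_zero.mpr (ne_of_gt hx)
        simp only [hgdef]
        field_simp
        ring
      rw [tendsto_congr' heq]
      have h2 : Tendsto (fun x : ℝ => (x - y)⁻¹) atTop (𝓝 0) := by
        apply Tendsto.inv_tendsto_atTop
        exact tendsto_atTop_add_const_right atTop (-y) tendsto_id
      simpa using (h2.const_mul ((c ^ 2 - y ^ 2) / c)).const_add (-(y / c))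
    have := (Real.continuous_arcsin.continuousAt.tendsto.comp h1).neg
    simpa [Real.arcsin_neg] using this
  have key := integral_Ioi_of_hasDerivAt_of_nonneg hcont hderiv
    (fun x hx => by
      simp only [Set.mem_Ioi] at hx
      have hxy : 0 < x - y := by linarith
      have hB : (0:ℝ) ≤ x ^ 2 - c ^ 2 := by nlinarith
      positivity) htend
  rw [key]
  have hgc : g c = 1 := by
    simp only [hgdef]
    rw [div_eq_one_iff_eq (by nlinarith : c * (c - y) ≠ 0)]
    ring
  simp only [hFdef, hgc, Real.arcsin_one]
  ring

theorem stmt19 (c y : ℝ) (hc : 0 < c) (hy1 : -c < y) (hy2 : y < c) :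
    (∫ t in Set.Iio (-c), Real.sqrt (c ^ 2 - y ^ 2) / ((y - t) * Real.sqrt (t ^ 2 - c ^ 2)))
      + (∫ t in Set.Ioi c, Real.sqrt (c ^ 2 - y ^ 2) / ((t - y) * Real.sqrt (t ^ 2 - c ^ 2)))
      = π := by
  have h1 := aux19 c y hc hy1 hy2
  have h2 := aux19 c (-y) hc (by linarith) (by linarith)
  have hsub : (∫ t in Set.Iio (-c), Real.sqrt (c ^ 2 - y ^ 2) / ((y - t) * Real.sqrt (t ^ 2 - c ^ 2)))
      = ∫ t in Set.Ioi c, Real.sqrt (c ^ 2 - (-y) ^ 2) / ((t - -y) * Real.sqrt (t ^ 2 - c ^ 2)) := by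
    rw [← integral_Iic_eq_integral_Iio,
      ← integral_comp_neg_Ioi c (fun t => Real.sqrt (c ^ 2 - y ^ 2) / ((y - t) * Real.sqrt (t ^ 2 - c ^ 2)))]
    apply setIntegral_congr_fun measurableSet_Ioi
    intro x _
    simp only [neg_sq]
    ring_nf
  rw [hsub, h2, h1]
  have : Real.arcsin (-y / c) = -Real.arcsin (y / c) := by
    rw [neg_div, Real.arcsin_neg]
  rw [this]
  ring
end
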